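/- A consequence relation ⊢ on a sentential language is substitution-invariant, monotonic and reflexive if and only if it has a strong intersective p-mixed semantics, i.e. a strong semantics whose truth-relation is the intersection of a family of mixed truth-relations |≡_{D_p^λ,D_c^λ} with D_p^λ ⊆ D_c^λ for every λ. -/

import Mathlib

universe u v w x

/-- Mixed truth-relation. -/
def Mixed {V : Type*} (Dp Dc : Set V) (γ δ : Set V) : Prop :=
  γ ⊆ Dp → (δ ∩ Dc).Nonempty

def Monotonic {L : Type*} (Cons : Set L → Set L → Prop) : Prop :=
  ∀ ⦃Γ₁ Γ₂ Δ₁ Δ₂ : Set L⦄, Γ₁ ⊆ Γ₂ → Δ₁ ⊆ Δ₂ → Cons Γ₁ Δ₁ → Cons Γ₂ Δ₂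

def ReflRel {L : Type*} (Cons : Set L → Set L → Prop) : Prop :=
  ∀ F : L, Cons {F} {F}

def TransRel {L : Type*} (Cons : Set L → Set L → Prop) : Prop :=
  ∀ Γ Δ : Set L, ¬ Cons Γ Δ →
    ∃ Γ' Δ' : Set L, Γ ⊆ Γ' ∧ Δ ⊆ Δ' ∧ ¬ Cons Γ' Δ' ∧ Γ' ∪ Δ' = Set.univ

def LRPermeable {L : Type*} (Cons : Set L → Set L → Prop) : Prop :=
  ∀ Γ Δ S : Set L, Cons (Γ ∪ S) Δ → Cons Γ (S ∪ Δ)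

def RLPermeable {L : Type*} (Cons : Set L → Set L → Prop) : Prop :=
  ∀ Γ Δ S : Set L, Cons Γ (S ∪ Δ) → Cons (Γ ∪ S) Δ

def Permeable {L : Type*} (Cons : Set L → Set L → Prop) : Prop :=
  LRPermeable Cons ∨ RLPermeable Cons

def CompactRel {L : Type*} (Cons : Set L → Set L → Prop) : Prop :=
  ∀ Γ Δ : Set L, Cons Γ Δ →
    ∃ Γ' Δ' : Set L, Γ' ⊆ Γ ∧ Δ' ⊆ Δ ∧ Γ'.Finite ∧ Δ'.Finite ∧ Cons Γ' Δ'

/-- Sound and complete intersective mixed semantics. -/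
def IsIMS {L V W Λ : Type*} (Cons : Set L → Set L → Prop)
    (interp : L → W → V) (Dp Dc : Λ → Set V) : Prop :=
  ∀ Γ Δ : Set L, Cons Γ Δ ↔
    ∀ (w : W) (l : Λ), Mixed (Dp l) (Dc l)
      ((fun F => interp F w) '' Γ) ((fun F => interp F w) '' Δ)

/-- Sound and complete mixed semantics (single pair). -/
def IsMixedSem {L V W : Type*} (Cons : Set L → Set L → Prop)
    (interp : L → W → V) (Dp Dc : Set V) : Prop :=
  ∀ Γ Δ : Set L, Cons Γ Δ ↔
    ∀ w : W, Mixed Dp Dc ((fun F => interp F w) '' Γ) ((fun F => interp F w) '' Δ)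

/-- Formulae of a sentential language. -/
inductive Formula (A : Type u) (C : Type u) (ar : C → ℕ) : Type u
  | atom : A → Formula A C ar
  | conn : (c : C) → (Fin (ar c) → Formula A C ar) → Formula A C ar

/-- Substitution induced by a map from atoms to formulae. -/
def Formula.subst {A C : Type u} {ar : C → ℕ} (σ : A → Formula A C ar) :
    Formula A C ar → Formula A C ar
  | .atom a => σ a
  | .conn c Fs => .conn c (fun i => (Fs i).subst σ)

def SubstInvariant {A C : Type u} {ar : C → ℕ}
    (Cons : Set (Formula A C ar) → Set (Formula A C ar) → Prop) : Prop :=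
  ∀ (σ : A → Formula A C ar) (Γ Δ : Set (Formula A C ar)),
    Cons Γ Δ → Cons (Formula.subst σ '' Γ) (Formula.subst σ '' Δ)

/-- Evaluation of formulae from truth-functions and a valuation. -/
def evalF {A C : Type u} {ar : C → ℕ} {V : Type v}
    (tf : (c : C) → (Fin (ar c) → V) → V) (v : A → V) : Formula A C ar → V
  | .atom a => v a
  | .conn c Fs => tf c (fun i => evalF tf v (Fs i))

/-- Truth-functionality of an interpretation w.r.t. truth-functions. -/
def Compositional {A C : Type u} {ar : C → ℕ} {V : Type v} {W : Type w}
    (interp : Formula A C ar → W → V)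
    (tf : (c : C) → (Fin (ar c) → V) → V) : Prop :=
  ∀ (c : C) (Fs : Fin (ar c) → Formula A C ar) (w : W),
    interp (Formula.conn c Fs) w = tf c (fun i => interp (Fs i) w)

/-- Regular connectives. -/
def RegularRel {A C : Type u} {ar : C → ℕ}
    (Cons : Set (Formula A C ar) → Set (Formula A C ar) → Prop) : Prop :=
  ∀ c : C, ∃ Bp Bc : Set (Set (Fin (ar c)) × Set (Fin (ar c))),
    ∀ (Γ Δ : Set (Formula A C ar)) (Fs : Fin (ar c) → Formula A C ar),
      (Cons (Γ ∪ {Formula.conn c Fs}) Δ ↔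
        ∀ B ∈ Bp, Cons (Γ ∪ Fs '' B.1) (Fs '' B.2 ∪ Δ)) ∧
      (Cons Γ ({Formula.conn c Fs} ∪ Δ) ↔
        ∀ B ∈ Bc, Cons (Γ ∪ Fs '' B.1) (Fs '' B.2 ∪ Δ))

lemma evalF_conn_eq_subst {A C : Type u} {ar : C → ℕ}
    (v : A → Formula A C ar) (F : Formula A C ar) :
    evalF (fun c Fs => Formula.conn c Fs) v F = F.subst v := by
  induction F with
  | atom a => rfl
  | conn c Fs ih =>
    simp only [evalF, Formula.subst]
    exact congrArg _ (funext ih)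

lemma subst_atom_id {A C : Type u} {ar : C → ℕ} (F : Formula A C ar) :
    F.subst Formula.atom = F := by
  induction F with
  | atom a => rfl
  | conn c Fs ih =>
    simp only [Formula.subst]
    exact congrArg _ (funext ih)

lemma evalF_subst {A C : Type u} {ar : C → ℕ} {V : Type v}
    (tf : (c : C) → (Fin (ar c) → V) → V) (v : A → V)
    (σ : A → Formula A C ar) (F : Formula A C ar) :
    evalF tf v (F.subst σ) = evalF tf (fun a => evalF tf v (σ a)) F := by
  induction F with
  | atom a => rfl
  | conn c Fs ih =>
    simp only [Formula.subst, evalF]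
    exact congrArg _ (funext ih)

/-- substitution-invariance + monotonicity + reflexivity is
equivalent to the existence of a strong intersective p-mixed semantics. -/
theorem statement_4 {A C : Type u} (ar : C → ℕ)
    (Cons : Set (Formula A C ar) → Set (Formula A C ar) → Prop) :
    (SubstInvariant Cons ∧ Monotonic Cons ∧ ReflRel Cons) ↔
      ∃ (V : Type u) (tf : (c : C) → (Fin (ar c) → V) → V)
        (Λ : Type u) (Dp Dc : Λ → Set V),
        (∀ l : Λ, Dp l ⊆ Dc l) ∧
        ∀ Γ Δ : Set (Formula A C ar), Cons Γ Δ ↔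
          ∀ (v : A → V) (l : Λ),
            Mixed (Dp l) (Dc l)
              ((fun F => evalF tf v F) '' Γ) ((fun F => evalF tf v F) '' Δ) := by
  constructor
  · rintro ⟨hsub, hmono, hrefl⟩
    refine ⟨Formula A C ar, fun c Fs => Formula.conn c Fs,
      {p : Set (Formula A C ar) × Set (Formula A C ar) // ¬ Cons p.1 p.2},
      fun l => l.1.1, fun l => (l.1.2)ᶜ, ?_, ?_⟩
    · rintro ⟨⟨Γ₀, Δ₀⟩, hne⟩ x hx hx'
      exact hne (hmono (Set.singleton_subset_iff.mpr hx)
        (Set.singleton_subset_iff.mpr (by simpa using hx')) (hrefl x))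
    · intro Γ Δ
      constructor
      · rintro h v ⟨⟨Γ₀, Δ₀⟩, hne⟩ hγ
        by_contra hemp
        apply hne
        have hΔ : (fun F => evalF (fun c Fs => Formula.conn c Fs) v F) '' Δ ⊆ Δ₀ := by
          intro x hx
          by_contra hxn
          exact hemp ⟨x, hx, hxn⟩
        have h1 := hsub v Γ Δ h
        have him : ∀ S : Set (Formula A C ar),
            Formula.subst v '' S = (fun F => evalF (fun c Fs => Formula.conn c Fs) v F) '' S := by
          intro S
          ext x
          constructor
          · rintro ⟨y, hy, rfl⟩; exact ⟨y, hy, evalF_conn_eq_subst v y⟩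
          · rintro ⟨y, hy, rfl⟩; exact ⟨y, hy, (evalF_conn_eq_subst v y).symm⟩
        rw [him Γ, him Δ] at h1
        exact hmono hγ hΔ h1
      · intro h
        by_contra hn
        have := h Formula.atom ⟨⟨Γ, Δ⟩, hn⟩
        have heq : ∀ S : Set (Formula A C ar),
            (fun F => evalF (fun c Fs => Formula.conn c Fs) Formula.atom F) '' S = S := by
          intro S
          have : (fun F => evalF (fun c Fs => Formula.conn c Fs) Formula.atom F)
              = (id : Formula A C ar → Formula A C ar) := by
            funext F
            simp [evalF_conn_eq_subst, subst_atom_id]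
          rw [this, Set.image_id]
        rw [heq Γ, heq Δ] at this
        obtain ⟨x, hx, hx'⟩ := this subset_rfl
        exact hx' hx
  · rintro ⟨V, tf, Λ, Dp, Dc, hDD, hsem⟩
    refine ⟨?_, ?_, ?_⟩
    · intro σ Γ Δ h
      rw [hsem] at h ⊢
      intro v l
      have key : ∀ S : Set (Formula A C ar),
          (fun F => evalF tf v F) '' (Formula.subst σ '' S)
            = (fun F => evalF tf (fun a => evalF tf v (σ a)) F) '' S := by
        intro S
        rw [Set.image_image]
        apply Set.image_congr
        intro F _
        exact evalF_subst tf v σ F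
      rw [key Γ, key Δ]
      exact h (fun a => evalF tf v (σ a)) l
    · intro Γ₁ Γ₂ Δ₁ Δ₂ hΓ hΔ h
      rw [hsem] at h ⊢
      intro v l hγ
      obtain ⟨x, hx, hx'⟩ := h v l ((Set.image_mono (f := _) hΓ).trans hγ)
      exact ⟨x, Set.image_mono (f := _) hΔ hx, hx'⟩
    · intro F
      rw [hsem]
      intro v l hγ
      refine ⟨evalF tf v F, ⟨F, rfl, rfl⟩, hDD l (hγ ⟨F, rfl, rfl⟩)⟩
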